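/- For every graph G, the treewidth of G is at least the bramble number of G minus 1; that is, every tree decomposition of G has a bag that is a hitting set for any given bramble of G. -/

import Mathlib

open SimpleGraph

namespace TWPaper

/-- `(T, B)` is a tree decomposition of `G`. -/
def IsTreeDecomp {V ι : Type*} (G : SimpleGraph V) (T : SimpleGraph ι) (B : ι → Set V) : Prop :=
  T.IsTree ∧
  (∀ v w : V, G.Adj v w → ∃ x, v ∈ B x ∧ w ∈ B x) ∧
  (∀ v : V, (T.induce {x | v ∈ B x}).Connected)

/-- `G` has a tree decomposition of width at most `k`. -/
def HasTDWidthLE {V : Type*} (G : SimpleGraph V) (k : ℕ) : Prop :=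
  ∃ (ι : Type) (T : SimpleGraph ι) (B : ι → Set V),
    IsTreeDecomp G T B ∧ ∀ x, (B x).ncard ≤ k + 1

/-- Treewidth of `G`. -/
noncomputable def treewidth {V : Type*} (G : SimpleGraph V) : ℕ :=
  sInf {k | HasTDWidthLE G k}

/-- Two vertex sets touch: they intersect or an edge joins them. -/
def Touches {V : Type*} (G : SimpleGraph V) (A B : Set V) : Prop :=
  (A ∩ B).Nonempty ∨ ∃ a ∈ A, ∃ b ∈ B, G.Adj a b

/-- A bramble: a set of connected subgraphs (given by vertex sets) that pairwise touch. -/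
def IsBramble {V : Type*} (G : SimpleGraph V) (𝓑 : Set (Set V)) : Prop :=
  (∀ A ∈ 𝓑, (G.induce A).Connected) ∧ ∀ A ∈ 𝓑, ∀ B ∈ 𝓑, Touches G A B

/-- `S` hits every element of `𝓑`. -/
def IsHitting {V : Type*} (𝓑 : Set (Set V)) (S : Set V) : Prop :=
  ∀ A ∈ 𝓑, (S ∩ A).Nonempty

/-- The order of a bramble: minimum size of a hitting set. -/
noncomputable def brambleOrder {V : Type*} (𝓑 : Set (Set V)) : ℕ :=
  sInf {n | ∃ S : Set V, IsHitting 𝓑 S ∧ S.ncard = n}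

/-- The bramble number: maximum order of a bramble. -/
noncomputable def brambleNumber {V : Type*} (G : SimpleGraph V) : ℕ :=
  sSup {n | ∃ 𝓑 : Set (Set V), IsBramble G 𝓑 ∧ brambleOrder 𝓑 = n}

/-- A tangle: connected subgraphs such that any three share a vertex or
meet a common edge's endpoints. -/
def IsTangle {V : Type*} (G : SimpleGraph V) (τ : Set (Set V)) : Prop :=
  (∀ A ∈ τ, (G.induce A).Connected) ∧
  ∀ A ∈ τ, ∀ B ∈ τ, ∀ C ∈ τ,
    (∃ v, v ∈ A ∩ B ∩ C) ∨
    ∃ u v, G.Adj u v ∧ (u ∈ A ∨ v ∈ A) ∧ (u ∈ B ∨ v ∈ B) ∧ (u ∈ C ∨ v ∈ C)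

/-- The tangle number: maximum order of a tangle. -/
noncomputable def tangleNumber {V : Type*} (G : SimpleGraph V) : ℕ :=
  sSup {n | ∃ τ : Set (Set V), IsTangle G τ ∧ brambleOrder τ = n}

/-- `G - X` : delete the vertices of `X` (kept on the same vertex type,
vertices of `X` become isolated). -/
def delVerts {V : Type*} (G : SimpleGraph V) (X : Set V) : SimpleGraph V where
  Adj a b := G.Adj a b ∧ a ∉ X ∧ b ∉ X
  symm := by
    refine ⟨?_⟩
    intro a b h
    exact ⟨h.1.symm, h.2.2, h.2.1⟩
  loopless := by
    refine ⟨?_⟩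
    intro a h
    exact G.loopless.irrefl a h.1

/-- The vertex set of the component of `G - X` containing `v`. -/
def comp {V : Type*} (G : SimpleGraph V) (X : Set V) (v : V) : Set V :=
  {w | (delVerts G X).Reachable v w}

/-- `X` is a `(k, S, c)`-separator of `G`. -/
def IsSeparator {V : Type*} (G : SimpleGraph V) (k : ℕ) (S : Set V) (c : ℝ) (X : Set V) : Prop :=
  X.ncard ≤ k ∧
  ∀ v ∉ X, ((comp G X v ∩ S).ncard : ℝ) ≤ c * ((S \ X).ncard : ℝ)

/-- The separation number `sep_c(G)`. -/
noncomputable def sepNum {V : Type*} (G : SimpleGraph V) (c : ℝ) : ℕ :=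
  sInf {k | ∀ S : Set V, ∃ X : Set V, IsSeparator G k S c X}

/-- `X` is a `(k, S, c)*`-separator of `G`. -/
def IsStarSeparator {V : Type*} (G : SimpleGraph V) (k : ℕ) (S : Set V) (c : ℝ) (X : Set V) :
    Prop :=
  X.ncard ≤ k ∧
  ∀ v ∉ X, ((comp G X v ∩ (S \ X)).ncard : ℝ) ≤ c * (S.ncard : ℝ)

/-- The variant separation number `sep*_c(G)`. -/
noncomputable def sepStarNum {V : Type*} (G : SimpleGraph V) (c : ℝ) : ℕ :=
  sInf {k | ∀ S : Set V, ∃ X : Set V, IsStarSeparator G k S c X}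

/-- `G` has a branch decomposition of width at most `w`. -/
def HasBDWidthLE {V : Type*} (G : SimpleGraph V) (w : ℕ) : Prop :=
  ∃ (ι : Type) (_ : Finite ι) (T : SimpleGraph ι), T.IsTree ∧
    (∀ x : ι, (T.neighborSet x).ncard = 3 ∨ (T.neighborSet x).ncard = 1) ∧
    ∃ θ : G.edgeSet ≃ {x : ι // (T.neighborSet x).ncard = 1},
      ∀ a b : ι, T.Adj a b →
        {v : V | ∃ e₁ e₂ : G.edgeSet, v ∈ e₁.1 ∧ v ∈ e₂.1 ∧
          ¬ (T.deleteEdges {s(a, b)}).Reachable (θ e₁).1 (θ e₂).1}.ncard ≤ w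

/-- Branchwidth of `G` (`0` if no branch decomposition exists). -/
noncomputable def branchwidth {V : Type*} (G : SimpleGraph V) : ℕ :=
  sInf {w | HasBDWidthLE G w}

/-- `H` is a minor of `G`, via a model of branch sets. -/
def IsMinor {W V : Type*} (H : SimpleGraph W) (G : SimpleGraph V) : Prop :=
  ∃ f : W → Set V,
    (∀ w, (G.induce (f w)).Connected) ∧
    (∀ a b, a ≠ b → Disjoint (f a) (f b)) ∧
    ∀ a b, H.Adj a b → ∃ u ∈ f a, ∃ v ∈ f b, G.Adj u v

/-- The lexicographic product `T[K_k]`. -/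
def treeLex {ι : Type*} (T : SimpleGraph ι) (k : ℕ) : SimpleGraph (ι × Fin k) where
  Adj a b := T.Adj a.1 b.1 ∨ (a.1 = b.1 ∧ a.2 ≠ b.2)
  symm := by
    refine ⟨?_⟩
    rintro a b (h | ⟨h1, h2⟩)
    · exact Or.inl h.symm
    · exact Or.inr ⟨h1.symm, h2.symm⟩
  loopless := by
    refine ⟨?_⟩
    rintro a (h | ⟨h1, h2⟩)
    · exact T.loopless.irrefl _ h
    · exact h2 rfl

/-- The lexicographic tree product number. -/
noncomputable def ltp {V : Type*} (G : SimpleGraph V) : ℕ :=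
  sInf {k | ∃ (ι : Type) (T : SimpleGraph ι), T.IsTree ∧ IsMinor G (treeLex T k)}

/-- The cartesian tree product number. -/
noncomputable def ctp {V : Type*} (G : SimpleGraph V) : ℕ :=
  sInf {k | ∃ (ι : Type) (T : SimpleGraph ι), T.IsTree ∧
    IsMinor G (T.boxProd (completeGraph (Fin k)))}

/-- `S` is `k`-linked in `G`. -/
def IsLinked {V : Type*} (G : SimpleGraph V) (k : ℕ) (S : Set V) : Prop :=
  ∀ X : Set V, X.ncard < k → ∃ v, v ∉ X ∧ S.ncard < 2 * (comp G X v ∩ S).ncard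

/-- The linkedness of `G`: maximum `k ≥ 1` for which `G` has a `k`-linked set. -/
noncomputable def linkedness {V : Type*} (G : SimpleGraph V) : ℕ :=
  sSup {k | 0 < k ∧ ∃ S : Set V, IsLinked G k S}

/-- `S` is well-linked in `G`. -/
def WellLinked {V : Type*} (G : SimpleGraph V) (S : Set V) : Prop :=
  ∀ A B : Finset V, ↑A ⊆ S → ↑B ⊆ S → A.card = B.card →
    ∃ (σ : A ≃ B) (p : ∀ a : A, G.Walk (a : V) ((σ a : V))),
      (∀ a, (p a).IsPath) ∧
      ∀ a a' : A, a ≠ a' → ∀ v, v ∈ (p a).support → v ∉ (p a').support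

/-- `S` is externally-well-linked in `G`: the linking paths can be chosen with
no internal vertices in `S`. -/
def ExternallyWellLinked {V : Type*} (G : SimpleGraph V) (S : Set V) : Prop :=
  ∀ A B : Finset V, ↑A ⊆ S → ↑B ⊆ S → A.card = B.card →
    ∃ (σ : A ≃ B) (p : ∀ a : A, G.Walk (a : V) ((σ a : V))),
      (∀ a, (p a).IsPath) ∧
      (∀ a a' : A, a ≠ a' → ∀ v, v ∈ (p a).support → v ∉ (p a').support) ∧
      ∀ a : A, ∀ v ∈ (p a).support, v ∈ S → v = (a : V) ∨ v = ((σ a : V))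

/-- The well-linked number of `G`. -/
noncomputable def wellLinkedNum {V : Type*} (G : SimpleGraph V) : ℕ :=
  sSup {n | ∃ S : Set V, WellLinked G S ∧ S.ncard = n}

/-- A graph is chordal if every cycle of length at least 4 has a chord
(equivalently, there is no induced cycle of length at least four). -/
def Chordal {V : Type*} (H : SimpleGraph V) : Prop :=
  ∀ (v : V) (c : H.Walk v v), c.IsCycle → 4 ≤ c.length →
    ∃ a b, a ∈ c.support ∧ b ∈ c.support ∧ H.Adj a b ∧ s(a, b) ∉ c.edges

/-- `G` is a `k`-tree. -/
inductive IsKTree (k : ℕ) : ∀ (V : Type), SimpleGraph V → Prop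
  | base (V : Type) (G : SimpleGraph V) (h : Nonempty (G ≃g completeGraph (Fin (k + 1)))) :
      IsKTree k V G
  | step (V : Type) (G : SimpleGraph V) (v : V)
      (hdeg : (G.neighborSet v).ncard = k)
      (hcl : G.IsClique (G.neighborSet v))
      (h : IsKTree k ↥{u : V | u ≠ v} (G.induce {u : V | u ≠ v})) :
      IsKTree k V G

/-- The `k × k` grid graph. -/
def grid (k : ℕ) : SimpleGraph (Fin k × Fin k) where
  Adj a b := (a.1 = b.1 ∧ (a.2.val + 1 = b.2.val ∨ b.2.val + 1 = a.2.val)) ∨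
             (a.2 = b.2 ∧ (a.1.val + 1 = b.1.val ∨ b.1.val + 1 = a.1.val))
  symm := by
    refine ⟨?_⟩
    rintro a b (⟨h1, h2⟩ | ⟨h1, h2⟩)
    · exact Or.inl ⟨h1.symm, h2.symm⟩
    · exact Or.inr ⟨h1.symm, h2.symm⟩
  loopless := by
    refine ⟨?_⟩
    rintro a (⟨h1, h2⟩ | ⟨h1, h2⟩) <;> omega

section Helly

variable {ι : Type*} {T : SimpleGraph ι}

/-- Connectivity of a vertex set, phrased via walks staying in the set. -/
def Conn (T : SimpleGraph ι) (S : Set ι) : Prop :=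
  ∀ x ∈ S, ∀ y ∈ S, ∃ w : T.Walk x y, ∀ v ∈ w.support, v ∈ S

lemma conn_exists_path {S : Set ι} (hS : Conn T S) {x y : ι} (hx : x ∈ S) (hy : y ∈ S) :
    ∃ p : T.Walk x y, p.IsPath ∧ ∀ v ∈ p.support, v ∈ S := by
  classical
  obtain ⟨w, hw⟩ := hS x hx y hy
  exact ⟨w.bypass, w.bypass_isPath, fun v hv => hw v (w.support_bypass_subset hv)⟩

lemma median (hT : T.IsAcyclic) {z x y : ι} (q : T.Walk z x) :
    q.IsPath → ∀ (r : T.Walk z y), r.IsPath → ∀ (p : T.Walk x y), p.IsPath →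
    ∃ m, m ∈ q.support ∧ m ∈ r.support ∧ m ∈ p.support := by
  classical
  induction q with
  | nil =>
    intro _ r _ p _
    exact ⟨_, Walk.start_mem_support _, Walk.start_mem_support _, Walk.start_mem_support _⟩
  | @cons z z₁ x h q' ih =>
    intro hq r hr p hp
    by_cases hzp : z ∈ p.support
    · exact ⟨z, Walk.start_mem_support _, Walk.start_mem_support _, hzp⟩
    cases r with
    | nil => exact absurd p.end_mem_support hzp
    | @cons _ z₂ _ h2 r' =>
      by_cases hz12 : z₁ = z₂
      · subst hz12
        obtain ⟨m, hm1, hm2, hm3⟩ := ih hq.of_cons r' hr.of_cons p hp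
        exact ⟨m, by simp [Walk.support_cons, hm1],
          by simp [Walk.support_cons, hm2], hm3⟩
      · exfalso
        have hq' : q'.IsPath := hq.of_cons
        have hr' : r'.IsPath := hr.of_cons
        have hzq : z ∉ q'.support := ((Walk.cons_isPath_iff h q').mp hq).2
        have hzr : z ∉ r'.support := ((Walk.cons_isPath_iff h2 r').mp hr).2
        have hdisj : ∀ w, w ∈ q'.support → w ∈ r'.support → False := by
          intro w hwq hwr
          have hP1 : (Walk.cons h (q'.takeUntil w hwq)).IsPath :=
            (Walk.cons_isPath_iff _ _).mpr ⟨hq'.takeUntil hwq,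
              fun hz => hzq (Walk.support_takeUntil_subset _ hwq hz)⟩
          have hP2 : (Walk.cons h2 (r'.takeUntil w hwr)).IsPath :=
            (Walk.cons_isPath_iff _ _).mpr ⟨hr'.takeUntil hwr,
              fun hz => hzr (Walk.support_takeUntil_subset _ hwr hz)⟩
          have hpe := hT.path_unique ⟨_, hP1⟩ ⟨_, hP2⟩
          have heq : Walk.cons h (q'.takeUntil w hwq) = Walk.cons h2 (r'.takeUntil w hwr) :=
            congrArg Subtype.val hpe
          have hsup := congrArg Walk.support heq
          rw [Walk.support_cons, Walk.support_cons,
            Walk.support_eq_cons (q'.takeUntil w hwq),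
            Walk.support_eq_cons (r'.takeUntil w hwr)] at hsup
          simp only [List.cons.injEq] at hsup
          exact hz12 hsup.2.1
        have hWp : ((Walk.cons h q').reverse.append (Walk.cons h2 r')).IsPath := by
          rw [Walk.isPath_def, Walk.support_append, Walk.support_reverse]
          rw [List.nodup_append]
          refine ⟨List.nodup_reverse.mpr (Walk.isPath_def _ |>.mp hq), ?_, ?_⟩
          · rw [Walk.support_cons, List.tail_cons]
            exact Walk.isPath_def _ |>.mp hr'
          · intro a ha b hb hab
            subst hab
            rw [List.mem_reverse] at ha
            rw [Walk.support_cons, List.tail_cons] at hb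
            rw [Walk.support_cons, List.mem_cons] at ha
            rcases ha with rfl | ha
            · exact hzr hb
            · exact hdisj a ha hb
        have hpe := hT.path_unique ⟨_, hWp⟩ ⟨p, hp⟩
        have heq : (Walk.cons h q').reverse.append (Walk.cons h2 r') = p :=
          congrArg Subtype.val hpe
        apply hzp
        rw [← heq, Walk.mem_support_append_iff]
        left
        rw [Walk.support_reverse, List.mem_reverse]
        exact Walk.start_mem_support _

lemma helly3 (hT : T.IsAcyclic) {S1 S2 S3 : Set ι}
    (h1 : Conn T S1) (h2 : Conn T S2) (h3 : Conn T S3) {x y z : ι}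
    (hx1 : x ∈ S1) (hx2 : x ∈ S2) (hy1 : y ∈ S1) (hy3 : y ∈ S3)
    (hz2 : z ∈ S2) (hz3 : z ∈ S3) : ∃ m, m ∈ S1 ∧ m ∈ S2 ∧ m ∈ S3 := by
  obtain ⟨p, hp, hpS⟩ := conn_exists_path h1 hx1 hy1
  obtain ⟨q, hq, hqS⟩ := conn_exists_path h2 hz2 hx2
  obtain ⟨r, hr, hrS⟩ := conn_exists_path h3 hz3 hy3
  obtain ⟨m, hm1, hm2, hm3⟩ := median hT q hq r hr p hp
  exact ⟨m, hpS m hm3, hqS m hm1, hrS m hm2⟩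

lemma conn_inter (hT : T.IsAcyclic) {S S' : Set ι} (hS : Conn T S) (hS' : Conn T S') :
    Conn T (S ∩ S') := by
  intro x hx y hy
  obtain ⟨p, hp, hpS⟩ := conn_exists_path hS hx.1 hy.1
  obtain ⟨p', hp', hpS'⟩ := conn_exists_path hS' hx.2 hy.2
  have hpe : p = p' := congrArg Subtype.val (hT.path_unique ⟨p, hp⟩ ⟨p', hp'⟩)
  exact ⟨p, fun v hv => ⟨hpS v hv, hpS' v (hpe ▸ hv)⟩⟩

lemma helly (hT : T.IsAcyclic) :
    ∀ (n : ℕ) (F : Set (Set ι)), F.Finite → F.ncard ≤ n → F.Nonempty →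
    (∀ S ∈ F, Conn T S ∧ S.Nonempty) →
    (∀ S ∈ F, ∀ S' ∈ F, (S ∩ S').Nonempty) → ∃ m, ∀ S ∈ F, m ∈ S := by
  intro n
  induction n with
  | zero =>
    intro F hfin hcard hne _ _
    rw [Nat.le_zero, Set.ncard_eq_zero hfin] at hcard
    exact absurd hcard hne.ne_empty
  | succ n ih =>
    intro F hfin hcard hne hconn hpair
    obtain ⟨S0, hS0⟩ := hne
    rcases Set.eq_empty_or_nonempty (F \ {S0}) with hsing | ⟨X0, hX0⟩
    · obtain ⟨m, hm⟩ := (hconn S0 hS0).2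
      refine ⟨m, fun S hS => ?_⟩
      have : S = S0 := by
        by_contra hne'
        exact (Set.eq_empty_iff_forall_notMem.mp hsing S) ⟨hS, hne'⟩
      exact this ▸ hm
    · set F' := (fun X => S0 ∩ X) '' (F \ {S0}) with hF'
      have hfin' : F'.Finite := hfin.diff.image _
      have hcard' : F'.ncard ≤ n := by
        have h1 : F'.ncard ≤ (F \ {S0}).ncard := Set.ncard_image_le hfin.diff
        have h2 : (F \ {S0}).ncard < F.ncard :=
          Set.ncard_diff_singleton_lt_of_mem hS0 hfin
        omega
      have hconn' : ∀ S ∈ F', Conn T S ∧ S.Nonempty := by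
        rintro S ⟨X, hX, rfl⟩
        exact ⟨conn_inter hT (hconn S0 hS0).1 (hconn X hX.1).1,
          hpair S0 hS0 X hX.1⟩
      have hpair' : ∀ S ∈ F', ∀ S' ∈ F', (S ∩ S').Nonempty := by
        rintro S ⟨X, hX, rfl⟩ S' ⟨X', hX', rfl⟩
        obtain ⟨a, ha⟩ := hpair S0 hS0 X hX.1
        obtain ⟨b, hb⟩ := hpair S0 hS0 X' hX'.1
        obtain ⟨c, hc⟩ := hpair X hX.1 X' hX'.1
        obtain ⟨m, hm0, hmX, hmX'⟩ := helly3 hT (hconn S0 hS0).1 (hconn X hX.1).1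
          (hconn X' hX'.1).1 ha.1 ha.2 hb.1 hb.2 hc.1 hc.2
        exact ⟨m, ⟨hm0, hmX⟩, ⟨hm0, hmX'⟩⟩
      obtain ⟨m, hm⟩ := ih F' hfin' hcard' ⟨_, Set.mem_image_of_mem _ hX0⟩ hconn' hpair'
      have hmS0 : m ∈ S0 := (hm _ (Set.mem_image_of_mem _ hX0)).1
      refine ⟨m, fun S hS => ?_⟩
      by_cases hSS : S = S0
      · exact hSS ▸ hmS0
      · exact (hm _ (Set.mem_image_of_mem _ ⟨hS, hSS⟩)).2

lemma conn_of_induce_connected {S : Set ι} (h : (T.induce S).Connected) : Conn T S := by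
  intro x hx y hy
  obtain ⟨w⟩ := h.preconnected ⟨x, hx⟩ ⟨y, hy⟩
  refine ⟨w.map (SimpleGraph.Embedding.induce S).toHom, fun v hv => ?_⟩
  erw [Walk.support_map] at hv
  obtain ⟨u, _, rfl⟩ := List.mem_map.mp hv
  exact u.2

end Helly

lemma conn_bramble_set {V ι : Type*} {G : SimpleGraph V} {T : SimpleGraph ι} {B : ι → Set V}
    (hB : ∀ v : V, Conn T {x | v ∈ B x})
    (hGB : ∀ v w : V, G.Adj v w → ∃ x, v ∈ B x ∧ w ∈ B x)
    {A : Set V} (hA : (G.induce A).Connected) :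
    Conn T {x | (B x ∩ A).Nonempty} := by
  have key : ∀ (a b : A) (_ : (G.induce A).Walk a b) (x : ι), (a : V) ∈ B x →
      ∀ y : ι, (b : V) ∈ B y →
      ∃ w : T.Walk x y, ∀ t ∈ w.support, (B t ∩ A).Nonempty := by
    intro a b wk
    induction wk with
    | nil =>
      rename_i a
      intro x hax y hay
      obtain ⟨w, hw⟩ := hB (a : V) x hax y hay
      exact ⟨w, fun t ht => ⟨(a : V), hw t ht, a.2⟩⟩
    | cons hadj wk' ih =>
      rename_i a c b
      intro x hax y hby
      obtain ⟨t0, h1, h2⟩ := hGB (a : V) (c : V) hadj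
      obtain ⟨w1, hw1⟩ := hB (a : V) x hax t0 h1
      obtain ⟨w2, hw2⟩ := ih t0 h2 y hby
      refine ⟨w1.append w2, fun t ht => ?_⟩
      rcases (Walk.mem_support_append_iff _ _).mp ht with h | h
      · exact ⟨(a : V), hw1 t h, a.2⟩
      · exact hw2 t h
  intro x hx y hy
  obtain ⟨v, hvB, hvA⟩ := hx
  obtain ⟨w, hwB, hwA⟩ := hy
  obtain ⟨wk⟩ := hA.preconnected ⟨v, hvA⟩ ⟨w, hwA⟩
  exact key ⟨v, hvA⟩ ⟨w, hwA⟩ wk x hvB y hwB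

lemma exists_hitting_bag {V : Type*} [Fintype V] {ι : Type*} (G : SimpleGraph V)
    (T : SimpleGraph ι) (B : ι → Set V) (hTD : IsTreeDecomp G T B)
    (𝓑 : Set (Set V)) (h𝓑 : IsBramble G 𝓑) :
    ∃ x, ∀ A ∈ 𝓑, ((B x) ∩ A).Nonempty := by
  obtain ⟨hT, hadj, hbags⟩ := hTD
  have hBconn : ∀ v : V, Conn T {x | v ∈ B x} := fun v => conn_of_induce_connected (hbags v)
  rcases Set.eq_empty_or_nonempty 𝓑 with rfl | hne
  · obtain ⟨x⟩ := hT.isConnected.nonempty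
    exact ⟨x, fun A hA => absurd hA (Set.notMem_empty A)⟩
  · set F := (fun A => {x | (B x ∩ A).Nonempty}) '' 𝓑 with hF
    have hfin : F.Finite := (Set.toFinite 𝓑).image _
    have hconn : ∀ S ∈ F, Conn T S ∧ S.Nonempty := by
      rintro S ⟨A, hA, rfl⟩
      refine ⟨conn_bramble_set hBconn hadj (h𝓑.1 A hA), ?_⟩
      obtain ⟨v⟩ := (h𝓑.1 A hA).nonempty
      obtain ⟨x⟩ := (hbags (v : V)).nonempty
      exact ⟨(x : ι), (v : V), x.2, v.2⟩
    have hpair : ∀ S ∈ F, ∀ S' ∈ F, (S ∩ S').Nonempty := by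
      rintro S ⟨A, hA, rfl⟩ S' ⟨A', hA', rfl⟩
      rcases h𝓑.2 A hA A' hA' with ⟨v, hv⟩ | ⟨a, ha, b, hb, hab⟩
      · obtain ⟨x⟩ := (hbags v).nonempty
        exact ⟨(x : ι), ⟨v, x.2, hv.1⟩, ⟨v, x.2, hv.2⟩⟩
      · obtain ⟨x, h1, h2⟩ := hadj a b hab
        exact ⟨x, ⟨a, h1, ha⟩, ⟨b, h2, hb⟩⟩
    obtain ⟨m, hm⟩ := helly hT.IsAcyclic F.ncard F hfin le_rfl (hne.image _) hconn hpair
    exact ⟨m, fun A hA => hm _ (Set.mem_image_of_mem _ hA)⟩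

lemma bot_unit_isTree : (⊥ : SimpleGraph Unit).IsTree := by
  constructor
  · exact ⟨fun a b => by rw [Subsingleton.elim a b]⟩
  · intro v c hc
    cases c with
    | nil => exact Walk.IsCycle.not_of_nil hc
    | cons h _ => exact h.elim


/-- tw(G) ≥ bn(G) - 1; indeed every tree decomposition contains a bag
hitting any given bramble. -/
theorem brambleNumber_le_treewidth {V : Type} [Fintype V] (G : SimpleGraph V) :
    brambleNumber G - 1 ≤ treewidth G ∧
    ∀ (ι : Type) (T : SimpleGraph ι) (B : ι → Set V), IsTreeDecomp G T B →
      ∀ 𝓑 : Set (Set V), IsBramble G 𝓑 → ∃ x, IsHitting 𝓑 (B x) := by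
  have key : ∀ (ι : Type) (T : SimpleGraph ι) (B : ι → Set V), IsTreeDecomp G T B →
      ∀ 𝓑 : Set (Set V), IsBramble G 𝓑 → ∃ x, IsHitting 𝓑 (B x) := by
    intro ι T B hTD 𝓑 h𝓑
    obtain ⟨x, hx⟩ := exists_hitting_bag G T B hTD 𝓑
      ⟨h𝓑.1, fun A hA B' hB' => h𝓑.2 A hA B' hB'⟩
    exact ⟨x, hx⟩
  refine ⟨?_, key⟩
  have hne : {k | HasTDWidthLE G k}.Nonempty := by
    refine ⟨Fintype.card V, Unit, ⊥, fun _ => Set.univ,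
      ⟨bot_unit_isTree, fun v w _ => ⟨(), trivial, trivial⟩, fun v => ?_⟩,
      fun _ => by rw [Set.ncard_univ, Nat.card_eq_fintype_card]; omega⟩
    have : Nonempty ↥{x : Unit | v ∈ (Set.univ : Set V)} := ⟨⟨(), Set.mem_univ v⟩⟩
    exact ⟨fun a b => by rw [Subsingleton.elim a b]⟩
  obtain ⟨κ, T, B, hTD, hw⟩ := Nat.sInf_mem hne
  have hub : ∀ n ∈ {n | ∃ 𝓑 : Set (Set V), IsBramble G 𝓑 ∧ brambleOrder 𝓑 = n},
      n ≤ treewidth G + 1 := by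
    rintro n ⟨𝓑, h𝓑, rfl⟩
    obtain ⟨x, hx⟩ := key κ T B hTD 𝓑 h𝓑
    calc brambleOrder 𝓑 ≤ (B x).ncard := Nat.sInf_le ⟨B x, hx, rfl⟩
      _ ≤ treewidth G + 1 := hw x
  have hOne : {n | ∃ 𝓑 : Set (Set V), IsBramble G 𝓑 ∧ brambleOrder 𝓑 = n}.Nonempty :=
    ⟨brambleOrder (∅ : Set (Set V)), ∅,
      ⟨fun A hA => absurd hA (Set.notMem_empty A),
       fun A hA => absurd hA (Set.notMem_empty A)⟩, rfl⟩
  have hle := csSup_le hOne hub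
  have : brambleNumber G ≤ treewidth G + 1 := hle
  omega


end TWPaper
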